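/- arXiv:1710.11565 — 2 statements merged into one kernel-verified Lean document; each statement's English description precedes it below -/
import Mathlib

section
/- Multiplicativity theorem: let ρ be a unitary representation of G = S_∞ × S_∞ × S_∞ on a complex Hilbert space V. For all α, β, γ ∈ ℕ and all p, q ∈ G, there exists N such that for all j ≥ N and all v ∈ V[γ], P[α]( ρ(p) ( P[β]( ρ(q) v ) ) ) = P[α]( ρ(p · Θ_j[β] · q) v ). (Equivalently, the compressions p ↦ P[α] ρ(p)|_{V[β]} define a representation of the category of double cosets: the composition of the compressions of p and q equals the compression of any representative of the ⊛-product of their double cosets.) -/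
open Equiv

abbrev P3 := Equiv.Perm ℕ × Equiv.Perm ℕ × Equiv.Perm ℕ

/-- The subgroup of finitely supported permutations of `ℕ`. -/
def Sinf : Subgroup (Equiv.Perm ℕ) where
  carrier := {g | {x | g x ≠ x}.Finite}
  one_mem' := by
    show Set.Finite {x | (1 : Equiv.Perm ℕ) x ≠ x}
    convert Set.finite_empty
    ext x; simp
  mul_mem' {f g} hf hg := by
    apply Set.Finite.subset (hf.union hg)
    intro x hx
    simp only [Set.mem_setOf_eq, Set.mem_union, Equiv.Perm.mul_apply] at hx ⊢
    by_contra hc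
    push_neg at hc
    rw [hc.2] at hx
    exact hx hc.1
  inv_mem' {g} hg := by
    apply Set.Finite.subset hg
    intro x hx
    simp only [Set.mem_setOf_eq] at hx ⊢
    intro h
    apply hx
    apply g.injective
    rw [Equiv.Perm.coe_inv, Equiv.apply_symm_apply, h]

/-- Permutations fixing every point `< α`. -/
def fixLt (α : ℕ) : Subgroup (Equiv.Perm ℕ) where
  carrier := {g | ∀ i < α, g i = i}
  one_mem' := fun _ _ => rfl
  mul_mem' {f g} hf hg := fun i hi => by
    simp only [Equiv.Perm.mul_apply, hg i hi, hf i hi]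
  inv_mem' {g} hg := fun i hi => by
    apply g.injective
    rw [Equiv.Perm.coe_inv, Equiv.apply_symm_apply, hg i hi]

/-- The diagonal embedding of `Perm ℕ` into the triple product. -/
def diag3 : Equiv.Perm ℕ →* P3 where
  toFun h := (h, h, h)
  map_one' := rfl
  map_mul' _ _ := rfl

/-- `G = S_∞ × S_∞ × S_∞`. -/
def Ggrp : Subgroup P3 := Sinf.prod (Sinf.prod Sinf)

/-- `K[α]`: diagonal triples `(h,h,h)` with `h ∈ S_∞` fixing `0,…,α-1`. -/
def KK (α : ℕ) : Subgroup P3 := Subgroup.map diag3 (Sinf ⊓ fixLt α)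

/-- The double coset `L·p·M`. -/
def dcosOf (L M : Subgroup P3) (p : P3) : Set P3 :=
  {y | ∃ a ∈ L, ∃ b ∈ M, y = a * p * b}

/-- underlying function of `θ_j[β]`. -/
def thetaFun (β j : ℕ) (x : ℕ) : ℕ :=
  if β ≤ x ∧ x < β + j then x + j
  else if β + j ≤ x ∧ x < β + 2 * j then x - j
  else x

lemma thetaFun_invol (β j : ℕ) : ∀ x, thetaFun β j (thetaFun β j x) = x := by
  intro x
  simp only [thetaFun]
  split_ifs <;> omega

/-- `θ_j[β]`: swaps the blocks `[β, β+j)` and `[β+j, β+2j)`. -/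
def theta (β j : ℕ) : Equiv.Perm ℕ :=
  ⟨thetaFun β j, thetaFun β j, thetaFun_invol β j, thetaFun_invol β j⟩

lemma theta_mem_Sinf (β j : ℕ) : theta β j ∈ Sinf := by
  apply Set.Finite.subset (Set.finite_Iio (β + 2 * j))
  intro x hx
  simp only [Set.mem_setOf_eq, theta, Equiv.coe_fn_mk, Set.mem_Iio] at hx ⊢
  by_contra hc
  push_neg at hc
  apply hx
  simp only [thetaFun]
  split_ifs <;> omega

/-- `Θ_j[β] = (θ_j[β], θ_j[β], θ_j[β])`. -/
def ThetaP (β j : ℕ) : P3 := diag3 (theta β j)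

lemma KK_le_G {α : ℕ} : KK α ≤ Ggrp := by
  rintro g ⟨h, hh, rfl⟩
  exact ⟨hh.1, hh.1, hh.1⟩

lemma Theta_mem_G (β j : ℕ) : ThetaP β j ∈ Ggrp :=
  ⟨theta_mem_Sinf β j, theta_mem_Sinf β j, theta_mem_Sinf β j⟩

namespace MultAux

open Equiv Finset

lemma mem_Sinf_iff {g : Perm ℕ} : g ∈ Sinf ↔ {x | g x ≠ x}.Finite := Iff.rfl

lemma mem_fixLt_iff {g : Perm ℕ} {m : ℕ} : g ∈ fixLt m ↔ ∀ i < m, g i = i := Iff.rfl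

lemma Sinf_bound {g : Perm ℕ} (hg : g ∈ Sinf) : ∃ s : ℕ, ∀ x, s ≤ x → g x = x := by
  obtain ⟨b, hb⟩ := (mem_Sinf_iff.mp hg).bddAbove
  refine ⟨b + 1, fun x hx => ?_⟩
  by_contra h
  have := hb (Set.mem_setOf_eq ▸ h : x ∈ {x | g x ≠ x})
  omega

lemma swap_mem_Sinf (a b : ℕ) : Equiv.swap a b ∈ Sinf := by
  rw [mem_Sinf_iff]
  apply Set.Finite.subset ((Set.finite_singleton b).insert a)
  intro x hx
  simp only [Set.mem_setOf_eq] at hx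
  by_contra hmem
  simp only [Set.mem_insert_iff, Set.mem_singleton_iff, not_or] at hmem
  exact hx (Equiv.swap_apply_of_ne_of_ne hmem.1 hmem.2)

lemma fix_ge {g : Perm ℕ} {m : ℕ} (hfix : ∀ i < m, g i = i) {x : ℕ} (hx : m ≤ x) :
    m ≤ g x := by
  by_contra h
  push_neg at h
  have h2 : g (g x) = g x := hfix _ h
  have := g.injective h2
  omega

/-- Extend a finite partial injection supported on `[m,∞)` to a finitely supported
permutation fixing `[0,m)`. -/
lemma extend_partial (m : ℕ) (f : ℕ → ℕ) (s : Finset ℕ)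
    (hs : ∀ x ∈ s, m ≤ x) (hf : ∀ x ∈ s, m ≤ f x)
    (hinj : ∀ x ∈ s, ∀ y ∈ s, f x = f y → x = y) :
    ∃ π : Perm ℕ, π ∈ Sinf ∧ (∀ i < m, π i = i) ∧ ∀ x ∈ s, π x = f x := by
  induction s using Finset.induction_on with
  | empty =>
    exact ⟨1, Sinf.one_mem, fun _ _ => rfl, fun x hx => absurd hx (by simp)⟩
  | @insert a s ha ih =>
    obtain ⟨π', h1, h2, h3⟩ := ih (fun x hx => hs x (mem_insert_of_mem hx))
      (fun x hx => hf x (mem_insert_of_mem hx))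
      (fun x hx y hy => hinj x (mem_insert_of_mem hx) y (mem_insert_of_mem hy))
    have hma : m ≤ a := hs a (mem_insert_self a s)
    have hfa : m ≤ f a := hf a (mem_insert_self a s)
    have hπa : m ≤ π' a := fix_ge h2 hma
    by_cases hcase : π' a = f a
    · refine ⟨π', h1, h2, fun x hx => ?_⟩
      rcases mem_insert.mp hx with rfl | hx
      · exact hcase
      · exact h3 x hx
    · refine ⟨Equiv.swap (π' a) (f a) * π', Sinf.mul_mem (swap_mem_Sinf _ _) h1, ?_, ?_⟩
      · intro i hi
        rw [Perm.mul_apply, h2 i hi]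
        exact Equiv.swap_apply_of_ne_of_ne (by omega) (by omega)
      · intro x hx
        rcases mem_insert.mp hx with rfl | hx
        · rw [Perm.mul_apply, Equiv.swap_apply_left]
        · rw [Perm.mul_apply, h3 x hx]
          refine Equiv.swap_apply_of_ne_of_ne (fun hEq => ?_) (fun hEq => ?_)
        -- f x ≠ π' a
          · have : π' x = π' a := by rw [h3 x hx, hEq]
            exact ha (π'.injective this ▸ hx)
          · exact ha ((hinj x (mem_insert_of_mem hx) a (mem_insert_self a s) hEq) ▸ hx)

/-- Double coset lemma: two finitely supported permutations which agree "visibly"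
on `[0,m)` differ by elements of the subgroup fixing `[0,m)` on both sides. -/
lemma dcos (m : ℕ) {g g' : Perm ℕ} (hg : g ∈ Sinf) (hg' : g' ∈ Sinf)
    (hC : ∀ x < m, (g x < m ∨ g' x < m) → g x = g' x) :
    ∃ h₁ h₂ : Perm ℕ, (h₁ ∈ Sinf ∧ ∀ i < m, h₁ i = i) ∧
      (h₂ ∈ Sinf ∧ ∀ i < m, h₂ i = i) ∧ g' = h₁ * g * h₂ := by
  obtain ⟨h₁, hS, hfix, hext⟩ := extend_partial m (fun y => g' (g⁻¹ y))
      (((Finset.range m).filter fun x => m ≤ g x).image g)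
      (by
        intro y hy
        obtain ⟨x, hx, rfl⟩ := Finset.mem_image.mp hy
        exact (Finset.mem_filter.mp hx).2)
      (by
        intro y hy
        obtain ⟨x, hx, rfl⟩ := Finset.mem_image.mp hy
        obtain ⟨hx1, hx2⟩ := Finset.mem_filter.mp hx
        have hxm : x < m := Finset.mem_range.mp hx1
        simp only [Perm.coe_inv, Equiv.symm_apply_apply]
        by_contra h
        push_neg at h
        have := hC x hxm (Or.inr h)
        omega)
      (by
        intro x _ y _ h
        simpa using g'.injective h)
  have key : ∀ x < m, h₁ (g x) = g' x := by
    intro x hx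
    by_cases hgx : m ≤ g x
    · have hmem : g x ∈ ((Finset.range m).filter fun x => m ≤ g x).image g :=
        Finset.mem_image.mpr ⟨x, Finset.mem_filter.mpr ⟨Finset.mem_range.mpr hx, hgx⟩, rfl⟩
      rw [hext _ hmem]
      simp
    · push_neg at hgx
      rw [hfix _ hgx]
      exact hC x hx (Or.inl hgx)
  refine ⟨h₁, g⁻¹ * h₁⁻¹ * g', ⟨hS, hfix⟩, ⟨?_, ?_⟩, ?_⟩
  · exact Sinf.mul_mem (Sinf.mul_mem (Sinf.inv_mem hg) (Sinf.inv_mem hS)) hg'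
  · intro i hi
    have : h₁⁻¹ (g' i) = g i := by rw [← key i hi, Perm.coe_inv, Equiv.symm_apply_apply]
    rw [Perm.mul_apply, Perm.mul_apply, this, Perm.coe_inv, Equiv.symm_apply_apply]
  · group

lemma theta_apply (β j x : ℕ) : theta β j x = thetaFun β j x := rfl

lemma theta_sq (β j : ℕ) : theta β j * theta β j = 1 := by
  ext x
  simp only [Perm.mul_apply, theta_apply, Perm.one_apply, thetaFun_invol]

lemma theta_inv (β j : ℕ) : (theta β j)⁻¹ = theta β j :=
  inv_eq_of_mul_eq_one_left (theta_sq β j)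

lemma theta_fixLt {β j m : ℕ} (hm : m ≤ β) : theta β j ∈ fixLt m := by
  intro i hi
  rw [theta_apply]
  unfold thetaFun
  split_ifs <;> omega

lemma thetaC_single {m β : ℕ} {j j' : ℕ} (hj : m + 1 ≤ j) (hj' : m + 1 ≤ j') :
    ∀ x < m, (theta β j x < m ∨ theta β j' x < m) → theta β j x = theta β j' x := by
  intro x hx h
  simp only [theta_apply, thetaFun] at h ⊢
  split_ifs at h ⊢ <;> omega

lemma thetaC_prod {m β : ℕ} {a b j' : ℕ} (ha : m + 1 ≤ a) (hb : m + 1 ≤ b)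
    (hj' : m + 1 ≤ j') (_hβ : β ≤ m)
    (hsep : 2 * a + m + 1 ≤ b ∨ 2 * b + m + 1 ≤ a) :
    ∀ x < m, (theta β j' x < m ∨ (theta β a * theta β b) x < m) →
      theta β j' x = (theta β a * theta β b) x := by
  intro x hx h
  simp only [Perm.mul_apply, theta_apply, thetaFun] at h ⊢
  split_ifs at h ⊢ <;> omega

end MultAux
section

variable {V : Type*} [NormedAddCommGroup V] [InnerProductSpace ℂ V] [CompleteSpace V]

/-- `V[α]`: the subspace of vectors fixed by `ρ(k)` for all `k ∈ K[α]`. -/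
def fixedVectors (ρ : ↥Ggrp →* (V ≃ₗᵢ[ℂ] V)) (α : ℕ) : Set V :=
  {v | ∀ k : ↥Ggrp, (k : P3) ∈ KK α → ρ k v = v}
open Equiv Finset Filter MultAux

local notation "⟪" x ", " y "⟫" => (inner ℂ x y : ℂ)

variable (ρ : ↥Ggrp →* (V ≃ₗᵢ[ℂ] V))

/-- diagonal element of `G`. -/
def DG (h : Perm ℕ) (hh : h ∈ Sinf) : ↥Ggrp := ⟨diag3 h, hh, hh, hh⟩

lemma DG_coe (h : Perm ℕ) (hh : h ∈ Sinf) : (DG h hh : P3) = diag3 h := rfl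

lemma mem_KK {n : ℕ} {h : Perm ℕ} (hS : h ∈ Sinf) (hf : ∀ i < n, h i = i) :
    diag3 h ∈ KK n :=
  Subgroup.mem_map_of_mem _ (Subgroup.mem_inf.mpr ⟨hS, hf⟩)

lemma rho_mul_apply (g₁ g₂ : ↥Ggrp) (v : V) : ρ (g₁ * g₂) v = ρ g₁ (ρ g₂ v) := by
  rw [map_mul]; rfl

lemma inner_rho_move (g : ↥Ggrp) (x z : V) : ⟪ρ g x, z⟫ = ⟪x, ρ g⁻¹ z⟫ := by
  have hz : z = ρ g (ρ g⁻¹ z) := by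
    rw [← rho_mul_apply, mul_inv_cancel, map_one]; rfl
  conv_lhs => rw [hz]
  exact (ρ g).inner_map_map x _

lemma inner_rho_move' (g : ↥Ggrp) (x z : V) : ⟪x, ρ g z⟫ = ⟪ρ g⁻¹ x, z⟫ := by
  have hx : x = ρ g (ρ g⁻¹ x) := by
    rw [← rho_mul_apply, mul_inv_cancel, map_one]; rfl
  conv_lhs => rw [hx]
  exact (ρ g).inner_map_map _ z

/-- matrix coefficients only depend on the `K[m]`-double coset. -/
lemma coef_transfer (m : ℕ) {w u : V}
    (hw : w ∈ fixedVectors ρ m) (hu : u ∈ fixedVectors ρ m)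
    {g g' : Perm ℕ} (hg : g ∈ Sinf) (hg' : g' ∈ Sinf)
    (hC : ∀ x < m, (g x < m ∨ g' x < m) → g x = g' x) :
    ⟪ρ (DG g' hg') w, u⟫ = ⟪ρ (DG g hg) w, u⟫ := by
  obtain ⟨h₁, h₂, ⟨h₁S, h₁f⟩, ⟨h₂S, h₂f⟩, hEq⟩ := dcos m hg hg' hC
  have e1 : DG g' hg' = DG h₁ h₁S * DG g hg * DG h₂ h₂S :=
    Subtype.ext (by simp only [DG_coe]; rw [hEq]; rfl)
  rw [e1, rho_mul_apply, rho_mul_apply]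
  have e2 : ρ (DG h₂ h₂S) w = w := hw _ (mem_KK h₂S h₂f)
  rw [e2, inner_rho_move]
  congr 1
  refine hu ((DG h₁ h₁S)⁻¹) ?_
  show ((DG h₁ h₁S)⁻¹ : P3) ∈ KK m
  exact (show ((DG h₁ h₁S)⁻¹ : P3) = diag3 h₁⁻¹ from rfl) ▸
    mem_KK (Sinf.inv_mem h₁S) ((fixLt m).inv_mem h₁f)

def Jseq (m : ℕ) : ℕ → ℕ
  | 0 => m + 1
  | (i+1) => 2 * Jseq m i + m + 1

lemma Jseq_ge (m : ℕ) : ∀ i, m + 1 + i ≤ Jseq m i := by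
  intro i
  induction i with
  | zero => simp [Jseq]
  | succ n ih => rw [Jseq]; omega

lemma Jseq_sep (m : ℕ) : ∀ i k, i < k → 2 * Jseq m i + m + 1 ≤ Jseq m k := by
  intro i k hik
  induction k with
  | zero => omega
  | succ n ih =>
    rcases Nat.lt_succ_iff_lt_or_eq.mp hik with h | h
    · have h1 := ih h
      have h2 := Jseq_ge m n
      rw [Jseq]; omega
    · subst h; rw [Jseq]

lemma hJfacts (m : ℕ) : ∃ J : ℕ → ℕ, (∀ i, m + 1 + i ≤ J i) ∧
    (∀ i k, i < k → 2 * J i + m + 1 ≤ J k) :=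
  ⟨Jseq m, Jseq_ge m, Jseq_sep m⟩

set_option maxHeartbeats 1000000 in
lemma key_lemma (ρ : ↥Ggrp →* (V ≃ₗᵢ[ℂ] V)) (P : ℕ → V → V)
    (hPmem : ∀ (α : ℕ) (v : V), P α v ∈ fixedVectors ρ α)
    (hPorth : ∀ (α : ℕ) (v w : V), w ∈ fixedVectors ρ α → ⟪v - P α v, w⟫ = 0)
    (m β : ℕ) (hβ : β ≤ m) {w u : V}
    (hw : w ∈ fixedVectors ρ m) (hu : u ∈ fixedVectors ρ m)
    {j : ℕ} (hj : m + 1 ≤ j) :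
    ⟪ρ (DG (theta β j) (theta_mem_Sinf β j)) w, u⟫ = ⟪P β w, u⟫ := by
  set T : ℕ → ↥Ggrp := fun i => DG (theta β i) (theta_mem_Sinf β i) with hT
  have hTinv : ∀ i, (T i)⁻¹ = T i := by
    intro i
    apply Subtype.ext
    show (diag3 (theta β i))⁻¹ = diag3 (theta β i)
    rw [← map_inv, theta_inv]
  -- adjoint shuffle for two theta's
  have hmove2 : ∀ i k, ⟪ρ (T i) w, ρ (T k) w⟫ = ⟪ρ (T k * T i) w, w⟫ := by
    intro i k
    have : ρ (T i) w = ρ (T k) (ρ ((T k)⁻¹ * T i) w) := by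
      rw [← rho_mul_apply, mul_inv_cancel_left]
    rw [this, (ρ (T k)).inner_map_map, hTinv]
  -- invariance of z ∈ V[β] under the T's
  have hTfix : ∀ i, ∀ z ∈ fixedVectors ρ β, ρ (T i) z = z := by
    intro i z hz
    exact hz (T i) (mem_KK (theta_mem_Sinf β i) (theta_fixLt le_rfl))
  -- constancy of matrix coefficients
  have hconstW : ∀ (u' : V), u' ∈ fixedVectors ρ m → ∀ j₁ j₂, m + 1 ≤ j₁ → m + 1 ≤ j₂ →
      ⟪ρ (T j₁) w, u'⟫ = ⟪ρ (T j₂) w, u'⟫ := by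
    intro u' hu' j₁ j₂ h1 h2
    exact coef_transfer ρ m hw hu' (theta_mem_Sinf β j₂) (theta_mem_Sinf β j₁)
      (thetaC_single h2 h1)
  obtain ⟨J, hJge, hJsep⟩ := hJfacts m
  set yv : ℕ → V := fun i => ρ (T (J i)) w with hyv
  set d : ℂ := ⟪ρ (T (m + 1)) w, w⟫ with hd
  set W : ℂ := ⟪w, w⟫ with hW
  have hJm : ∀ i, m + 1 ≤ J i := fun i => le_trans (by omega) (hJge i)
  -- pairwise inner products
  have hpt : ∀ i k, ⟪yv i, yv k⟫ = if i = k then W else d := by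
    intro i k
    by_cases hik : i = k
    · subst hik
      simp only [if_pos rfl, hyv, hW]
      exact (ρ (T (J i))).inner_map_map w w
    · rw [if_neg hik, hyv]
      simp only []
      rw [hmove2]
      have hprodS : theta β (J k) * theta β (J i) ∈ Sinf :=
        Sinf.mul_mem (theta_mem_Sinf _ _) (theta_mem_Sinf _ _)
      have hTT : T (J k) * T (J i) = DG (theta β (J k) * theta β (J i)) hprodS :=
        Subtype.ext rfl
      rw [hTT, hd]
      have hsep : 2 * J k + m + 1 ≤ J i ∨ 2 * J i + m + 1 ≤ J k := by
        rcases Nat.lt_or_ge i k with h | h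
        · exact Or.inr (hJsep i k h)
        · exact Or.inl (hJsep k i (by omega))
      exact coef_transfer ρ m hw hw (theta_mem_Sinf β (m+1)) hprodS
        (thetaC_prod (hJm k) (hJm i) le_rfl hβ hsep)
  have hnorm_yv : ∀ i, ‖yv i‖ = ‖w‖ := fun i => (ρ (T (J i))).norm_map w
  -- the averages
  set A : ℕ → V := fun n => ((n : ℂ) + 1)⁻¹ • ∑ i ∈ Finset.range (n + 1), yv i with hA
  have hcast : ∀ n : ℕ, ((n : ℂ) + 1) ≠ 0 := fun n => Nat.cast_add_one_ne_zero n
  have hconj_inv : ∀ n : ℕ, (starRingEnd ℂ) (((n:ℂ)+1)⁻¹) = ((n:ℂ)+1)⁻¹ := by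
    intro n; simp
  -- generic constant inner product with A n
  have hAconst : ∀ (u' : V) (c : ℂ), (∀ i, ⟪yv i, u'⟫ = c) → ∀ n, ⟪A n, u'⟫ = c := by
    intro u' c hc n
    rw [hA]
    simp only []
    rw [inner_smul_left, sum_inner, hconj_inv]
    rw [Finset.sum_congr rfl (fun i _ => hc i), Finset.sum_const, Finset.card_range,
      nsmul_eq_mul]
    push_cast
    exact inv_mul_cancel_left₀ (hcast n) c
  -- pair formula
  have hApair : ∀ a b : ℕ, a ≤ b → ⟪A a, A b⟫ = d + ((b:ℂ)+1)⁻¹ * (W - d) := by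
    intro a b hab
    rw [hA]
    simp only []
    rw [inner_smul_left, inner_smul_right, sum_inner, hconj_inv]
    have hrow : ∀ i ∈ Finset.range (a+1),
        ⟪yv i, ∑ k ∈ Finset.range (b+1), yv k⟫ = ((b:ℂ)+1) * d + (W - d) := by
      intro i hi
      have hib : i < a + 1 := Finset.mem_range.mp hi
      rw [inner_sum]
      have : ∀ k ∈ Finset.range (b+1), ⟪yv i, yv k⟫ = d + if i = k then W - d else 0 := by
        intro k _
        rw [hpt i k]
        split_ifs <;> ring
      rw [Finset.sum_congr rfl this, Finset.sum_add_distrib, Finset.sum_const,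
        Finset.card_range, Finset.sum_ite_eq, if_pos
          (Finset.mem_range.mpr (by omega : i < b + 1)), nsmul_eq_mul]
      push_cast
      ring
    rw [Finset.sum_congr rfl hrow, Finset.sum_const, Finset.card_range, nsmul_eq_mul]
    have ha := hcast a
    have hb := hcast b
    push_cast
    field_simp
  -- conjugation facts
  have hWconj : (starRingEnd ℂ) W = W := by rw [hW, inner_conj_symm]
  have hdconj : (starRingEnd ℂ) d = d := by
    rw [hd, inner_conj_symm, inner_rho_move', hTinv]
  -- distance estimate
  have hdist : ∀ a b : ℕ, a ≤ b →
      dist (A a) (A b) ≤ Real.sqrt (‖W - d‖ * (((a:ℝ)+1))⁻¹) := by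
    intro a b hab
    have hx : ⟪A a - A b, A a - A b⟫ = (((a:ℂ)+1)⁻¹ - ((b:ℂ)+1)⁻¹) * (W - d) := by
      rw [inner_sub_left, inner_sub_right, inner_sub_right,
        hApair a a le_rfl, hApair a b hab, hApair b b le_rfl]
      have : ⟪A b, A a⟫ = (starRingEnd ℂ) ⟪A a, A b⟫ := (inner_conj_symm _ _).symm
      rw [this, hApair a b hab]
      simp only [map_add, map_mul, map_sub, hWconj, hdconj, hconj_inv]
      ring
    have hnormsq : ‖A a - A b‖ ^ 2 = ‖⟪A a - A b, A a - A b⟫‖ := by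
      rw [inner_self_eq_norm_sq_to_K]
      simp
    rw [dist_eq_norm]
    rw [Real.le_sqrt (norm_nonneg _) (by positivity)]
    rw [hnormsq, hx, norm_mul]
    have e1 : (((a:ℂ)+1)⁻¹ - ((b:ℂ)+1)⁻¹) = (((((a:ℝ)+1)⁻¹ - ((b:ℝ)+1)⁻¹ : ℝ)) : ℂ) := by
      push_cast
      ring
    rw [e1, Complex.norm_real, Real.norm_eq_abs]
    have e2 : |((a:ℝ)+1)⁻¹ - ((b:ℝ)+1)⁻¹| ≤ ((a:ℝ)+1)⁻¹ := by
      have hba : ((b:ℝ)+1)⁻¹ ≤ ((a:ℝ)+1)⁻¹ := by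
        apply inv_anti₀ (by positivity)
        have : (a:ℝ) ≤ (b:ℝ) := by exact_mod_cast hab
        linarith
      have h0 : (0:ℝ) ≤ ((b:ℝ)+1)⁻¹ := by positivity
      rw [abs_of_nonneg (by linarith)]
      linarith
    calc |((a:ℝ)+1)⁻¹ - ((b:ℝ)+1)⁻¹| * ‖W - d‖
        ≤ ((a:ℝ)+1)⁻¹ * ‖W - d‖ := by
          apply mul_le_mul_of_nonneg_right e2 (norm_nonneg _)
      _ = ‖W - d‖ * (((a:ℝ)+1))⁻¹ := by ring
  -- Cauchy and limit
  have hb0 : Tendsto (fun n : ℕ => Real.sqrt (‖W - d‖ * (((n:ℝ)+1))⁻¹))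
      atTop (nhds 0) := by
    have h1 : Tendsto (fun n : ℕ => ‖W - d‖ * (((n:ℝ)+1))⁻¹) atTop (nhds 0) := by
      have := tendsto_one_div_add_atTop_nhds_zero_nat.const_mul (‖W - d‖)
      simpa [one_div, mul_zero] using this
    have h2 := (Real.continuous_sqrt.tendsto 0).comp h1
    rw [Real.sqrt_zero] at h2
    exact h2
  have hcauchy : CauchySeq A :=
    cauchySeq_of_le_tendsto_0' _ (fun n p hnp => hdist n p hnp) hb0
  obtain ⟨y, hy⟩ := cauchySeq_tendsto_of_complete hcauchy
  -- inner products with the limit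
  have hlim_inner : ∀ (u' : V) (c : ℂ), (∀ n, ⟪A n, u'⟫ = c) → ⟪y, u'⟫ = c := by
    intro u' c hc
    have h1 : Tendsto (fun n => ⟪A n, u'⟫) atTop (nhds ⟪y, u'⟫) :=
      hy.inner tendsto_const_nhds
    have h2 : (fun n => ⟪A n, u'⟫) = fun _ => c := funext hc
    rw [h2] at h1
    exact (tendsto_nhds_unique tendsto_const_nhds h1).symm
  have hyu : ⟪y, u⟫ = ⟪ρ (T j) w, u⟫ := by
    apply hlim_inner
    apply hAconst
    intro i
    exact hconstW u hu (J i) j (hJm i) hj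
  have hyz : ∀ z ∈ fixedVectors ρ β, ⟪y, z⟫ = ⟪w, z⟫ := by
    intro z hz
    apply hlim_inner
    apply hAconst
    intro i
    rw [hyv]
    simp only []
    rw [inner_rho_move, hTinv, hTfix _ z hz]
  -- the limit is K[β]-invariant
  have hyfix : y ∈ fixedVectors ρ β := by
    intro k hk
    obtain ⟨h, hmem, hdiag⟩ := Subgroup.mem_map.mp hk
    obtain ⟨hS, hfβ⟩ := Subgroup.mem_inf.mp hmem
    obtain ⟨s, hs⟩ := Sinf_bound hS
    have hterm : ∀ i, s ≤ i → ρ k (yv i) = yv i := by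
      intro i hi
      have hji : s ≤ J i := le_trans (by omega) (hJge i)
      have hjm : m + 1 ≤ J i := hJm i
      set j' := J i with hj'
      set h' := theta β j' * h * theta β j' with hh'
      have hh'S : h' ∈ Sinf :=
        Sinf.mul_mem (Sinf.mul_mem (theta_mem_Sinf β j') hS) (theta_mem_Sinf β j')
      have hh'f : ∀ x < m, h' x = x := by
        intro x hx
        rw [hh']
        rw [Perm.mul_apply, Perm.mul_apply]
        by_cases hxβ : x < β
        · have e1 : theta β j' x = x := by
            rw [theta_apply]; unfold thetaFun; split_ifs <;> omega
          rw [e1, hfβ x hxβ, e1]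
        · have e1 : theta β j' x = x + j' := by
            rw [theta_apply]; unfold thetaFun; split_ifs <;> omega
          have e2 : h (x + j') = x + j' := hs _ (by omega)
          have e3 : theta β j' (x + j') = x := by
            rw [theta_apply]; unfold thetaFun; split_ifs <;> omega
          rw [e1, e2, e3]
      have hcomm : k * T j' = T j' * DG h' hh'S := by
        apply Subtype.ext
        show (k : P3) * diag3 (theta β j') = diag3 (theta β j') * diag3 h'
        rw [← hdiag, ← map_mul, ← map_mul]
        congr 1
        rw [hh', ← mul_assoc, ← mul_assoc, theta_sq, one_mul]
      calc ρ k (yv i) = ρ (k * T j') w := (rho_mul_apply ρ _ _ w).symm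
        _ = ρ (T j' * DG h' hh'S) w := by rw [hcomm]
        _ = ρ (T j') (ρ (DG h' hh'S) w) := rho_mul_apply ρ _ _ w
        _ = yv i := by rw [hw _ (mem_KK hh'S hh'f)]
    have hBtend : Tendsto (fun n => ρ k (A n)) atTop (nhds (ρ k y)) :=
      ((ρ k).continuous.tendsto y).comp hy
    have hdiff : Tendsto (fun n => ρ k (A n) - A n) atTop (nhds 0) := by
      have hbnd : ∀ n : ℕ, ‖ρ k (A n) - A n‖ ≤ (((n:ℝ)+1))⁻¹ * ((s : ℝ) * (2 * ‖w‖)) := by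
        intro n
        have e0 : ρ k (A n) - A n
            = ((n : ℂ) + 1)⁻¹ • ∑ i ∈ Finset.range (n + 1), (ρ k (yv i) - yv i) := by
          rw [hA]
          simp only []
          rw [map_smul, map_sum, ← smul_sub, Finset.sum_sub_distrib]
        rw [e0, norm_smul]
        have e1 : ‖((n : ℂ) + 1)⁻¹‖ = (((n:ℝ)+1))⁻¹ := by
          rw [norm_inv]; norm_cast
        rw [e1]
        apply mul_le_mul_of_nonneg_left _ (by positivity)
        have e2 : ∑ i ∈ Finset.range (n + 1), (ρ k (yv i) - yv i)
            = ∑ i ∈ (Finset.range (n + 1)).filter (fun i => i < s), (ρ k (yv i) - yv i) := by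
          symm
          apply Finset.sum_filter_of_ne
          intro i _ hne
          by_contra hge
          exact hne (by rw [hterm i (by omega)]; simp)
        rw [e2]
        calc ‖∑ i ∈ (Finset.range (n + 1)).filter (fun i => i < s), (ρ k (yv i) - yv i)‖
            ≤ ∑ i ∈ (Finset.range (n + 1)).filter (fun i => i < s), ‖ρ k (yv i) - yv i‖ :=
              norm_sum_le _ _
          _ ≤ ∑ _i ∈ (Finset.range (n + 1)).filter (fun i => i < s), (2 * ‖w‖) := by
              apply Finset.sum_le_sum
              intro i _
              calc ‖ρ k (yv i) - yv i‖ ≤ ‖ρ k (yv i)‖ + ‖yv i‖ := norm_sub_le _ _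
                _ = 2 * ‖w‖ := by rw [(ρ k).norm_map, hnorm_yv]; ring
          _ ≤ (s : ℝ) * (2 * ‖w‖) := by
              rw [Finset.sum_const, nsmul_eq_mul]
              apply mul_le_mul_of_nonneg_right _ (by positivity)
              have : (Finset.range (n + 1)).filter (fun i => i < s) ⊆ Finset.range s := by
                intro i hi
                exact Finset.mem_range.mpr (Finset.mem_filter.mp hi).2
              have := Finset.card_le_card this
              rw [Finset.card_range] at this
              exact_mod_cast this
      have htnd : Tendsto (fun n : ℕ => (((n:ℝ)+1))⁻¹ * ((s : ℝ) * (2 * ‖w‖)))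
          atTop (nhds 0) := by
        have h1 : Tendsto (fun n : ℕ => (((n:ℝ)+1))⁻¹ * ((s : ℝ) * (2 * ‖w‖)))
            atTop (nhds (0 * ((s : ℝ) * (2 * ‖w‖)))) := by
          apply Tendsto.mul_const
          simpa [one_div] using (tendsto_one_div_add_atTop_nhds_zero_nat :
            Tendsto (fun n : ℕ => 1 / ((n : ℝ) + 1)) atTop (nhds 0))
        simpa using h1
      exact squeeze_zero_norm hbnd htnd
    have : Tendsto (fun n => ρ k (A n)) atTop (nhds y) := by
      have := hdiff.add hy
      simp only [sub_add_cancel, zero_add] at this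
      exact this
    exact tendsto_nhds_unique hBtend this
  -- identify the limit with the projection
  have hyP : y = P β w := by
    have htm : y - P β w ∈ fixedVectors ρ β := by
      intro k hk
      rw [map_sub, hyfix k hk, hPmem β w k hk]
    have hz : ⟪y - P β w, y - P β w⟫ = 0 := by
      rw [inner_sub_left, hyz _ htm, ← inner_sub_left]
      exact hPorth β w _ htm
    have := inner_self_eq_zero.mp hz
    exact sub_eq_zero.mp this
  rw [← hyu, hyP]
lemma fixed_conj (ρ : ↥Ggrp →* (V ≃ₗᵢ[ℂ] V)) {m n : ℕ} (hn : n ≤ m) (g : ↥Ggrp)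
    (hg1 : ∀ x, m ≤ x → (g : P3).1 x = x)
    (hg2 : ∀ x, m ≤ x → (g : P3).2.1 x = x)
    (hg3 : ∀ x, m ≤ x → (g : P3).2.2 x = x)
    {v : V} (hv : v ∈ fixedVectors ρ n) : ρ g v ∈ fixedVectors ρ m := by
  intro k hk
  obtain ⟨h, hmem, hdiag⟩ := Subgroup.mem_map.mp hk
  obtain ⟨hS, hfm⟩ := Subgroup.mem_inf.mp hmem
  have hdisj : ∀ (q : Perm ℕ), (∀ x, m ≤ x → q x = x) → h * q = q * h := by
    intro q hq
    have hd : h.Disjoint q := by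
      intro x
      by_cases hx : x < m
      · exact Or.inl (hfm x hx)
      · exact Or.inr (hq x (by omega))
    exact hd.commute
  have hcomm : k * g = g * k := by
    apply Subtype.ext
    show (k : P3) * (g : P3) = (g : P3) * (k : P3)
    rw [← hdiag]
    refine Prod.ext ?_ (Prod.ext ?_ ?_)
    · exact hdisj _ hg1
    · exact hdisj _ hg2
    · exact hdisj _ hg3
  have hkn : (k : P3) ∈ KK n := by
    refine Subgroup.mem_map.mpr ⟨h, Subgroup.mem_inf.mpr ⟨hS, ?_⟩, hdiag⟩
    intro i hi
    exact hfm i (lt_of_lt_of_le hi hn)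
  calc ρ k (ρ g v) = ρ (k * g) v := (rho_mul_apply ρ _ _ v).symm
    _ = ρ (g * k) v := by rw [hcomm]
    _ = ρ g (ρ k v) := rho_mul_apply ρ _ _ v
    _ = ρ g v := by rw [hv k hkn]

lemma proj_eq (ρ : ↥Ggrp →* (V ≃ₗᵢ[ℂ] V)) (P : ℕ → V → V)
    (hPmem : ∀ (α : ℕ) (v : V), P α v ∈ fixedVectors ρ α)
    (hPorth : ∀ (α : ℕ) (v w : V), w ∈ fixedVectors ρ α → ⟪v - P α v, w⟫ = 0)
    (α : ℕ) {a b : V} (hab : ∀ z ∈ fixedVectors ρ α, ⟪a - b, z⟫ = 0) :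
    P α a = P α b := by
  have htm : P α a - P α b ∈ fixedVectors ρ α := by
    intro k hk
    rw [map_sub, hPmem α a k hk, hPmem α b k hk]
  have hz : ⟪P α a - P α b, P α a - P α b⟫ = 0 := by
    have e : P α a - P α b = ((a - b) - (a - P α a)) + (b - P α b) := by abel
    nth_rewrite 1 [e]
    rw [inner_add_left, inner_sub_left, hab _ htm, hPorth α a _ htm, hPorth α b _ htm]
    ring
  exact sub_eq_zero.mp (inner_self_eq_zero.mp hz)

lemma perm_inv_fix {f : Perm ℕ} {x : ℕ} (h : f x = x) : f⁻¹ x = x :=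
  Equiv.Perm.inv_eq_iff_eq.mpr h.symm

/-- **Multiplicativity theorem.** For a unitary representation `ρ` of
`G = S_∞ × S_∞ × S_∞` on a complex Hilbert space `V`, and for all `α, β, γ` and
`p, q ∈ G`, for large `j` and every `v ∈ V[γ]`:
`P[α] ρ(p) P[β] ρ(q) v = P[α] ρ(p·Θ_j[β]·q) v`.
Here `P : ℕ → V → V` is the orthogonal projection onto `V[α]`, characterized by
`P α v ∈ V[α]` and `v - P α v ⟂ V[α]`. -/
theorem multiplicativity
    (ρ : ↥Ggrp →* (V ≃ₗᵢ[ℂ] V)) (P : ℕ → V → V)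
    (hPmem : ∀ (α : ℕ) (v : V), P α v ∈ fixedVectors ρ α)
    (hPorth : ∀ (α : ℕ) (v w : V), w ∈ fixedVectors ρ α → (inner ℂ (v - P α v) w : ℂ) = 0)
    (α β γ : ℕ) (p q : P3) (hp : p ∈ Ggrp) (hq : q ∈ Ggrp) :
    ∃ N : ℕ, ∀ j : ℕ, N ≤ j → ∀ v ∈ fixedVectors ρ γ,
      P α (ρ ⟨p, hp⟩ (P β (ρ ⟨q, hq⟩ v))) =
        P α (ρ ⟨p * ThetaP β j * q, mul_mem (mul_mem hp (Theta_mem_G β j)) hq⟩ v) := by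
  obtain ⟨s1, hs1⟩ := Sinf_bound hp.1
  obtain ⟨s2, hs2⟩ := Sinf_bound hp.2.1
  obtain ⟨s3, hs3⟩ := Sinf_bound hp.2.2
  obtain ⟨s4, hs4⟩ := Sinf_bound hq.1
  obtain ⟨s5, hs5⟩ := Sinf_bound hq.2.1
  obtain ⟨s6, hs6⟩ := Sinf_bound hq.2.2
  set m := α + β + γ + s1 + s2 + s3 + s4 + s5 + s6 with hm
  refine ⟨m + 1, fun j hj v hv => ?_⟩
  have hβm : β ≤ m := by omega
  set T : ↥Ggrp := DG (theta β j) (theta_mem_Sinf β j) with hT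
  have hsplit : (⟨p * ThetaP β j * q, mul_mem (mul_mem hp (Theta_mem_G β j)) hq⟩ : ↥Ggrp)
      = (⟨p, hp⟩ : ↥Ggrp) * T * (⟨q, hq⟩ : ↥Ggrp) := Subtype.ext rfl
  rw [hsplit]
  simp only [rho_mul_apply]
  set w := ρ (⟨q, hq⟩ : ↥Ggrp) v with hwdef
  have hwfix : w ∈ fixedVectors ρ m :=
    fixed_conj ρ (show γ ≤ m by omega) _ (fun x hx => hs4 x (by omega))
      (fun x hx => hs5 x (by omega)) (fun x hx => hs6 x (by omega)) hv
  apply proj_eq ρ P hPmem hPorth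
  intro z hz
  rw [← map_sub, inner_rho_move]
  set u := ρ ((⟨p, hp⟩ : ↥Ggrp))⁻¹ z with hudef
  have hufix : u ∈ fixedVectors ρ m := by
    apply fixed_conj ρ (show α ≤ m by omega) _ ?_ ?_ ?_ hz
    · intro x hx; exact perm_inv_fix (hs1 x (by omega))
    · intro x hx; exact perm_inv_fix (hs2 x (by omega))
    · intro x hx; exact perm_inv_fix (hs3 x (by omega))
  rw [inner_sub_left, hT,
    key_lemma ρ P hPmem hPorth m β hβm hwfix hufix (show m + 1 ≤ j by omega)]
  exact sub_self _

end
end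

section
/- Let ρ be a unitary representation of S_∞ on a complex Hilbert space V which is irreducible in the sense that the only closed subspaces of V invariant under ρ(g) for all g ∈ S_∞ are {0} and V. Then ρ admits a continuous extension to the full symmetric group Perm(ℕ) if and only if V[α] ≠ {0} for some α ∈ ℕ. Here a continuous extension means a group homomorphism ρ̄ from Perm(ℕ) to the unitary automorphisms of V such that ρ̄(g) = ρ(g) for all g ∈ S_∞ and such that for every v ∈ V and every ε > 0 there exists α ∈ ℕ with ‖ρ̄(h)v − v‖ < ε for every h ∈ Perm(ℕ) fixing each of the points 0,1,…,α−1. -/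
section

variable {V : Type*} [NormedAddCommGroup V] [InnerProductSpace ℂ V] [CompleteSpace V]

/-- `V[α]`: the closed subspace of vectors fixed by `ρ(h)` for every finitely supported
permutation `h` fixing the points `0, 1, …, α-1`. -/
def fixedVectorsS (ρ : ↥Sinf →* (V ≃ₗᵢ[ℂ] V)) (α : ℕ) : Set V :=
  {v | ∀ h : ↥Sinf, (∀ i < α, (h : Equiv.Perm ℕ) i = i) → ρ h v = v}

/-- `ρ̄ : Perm(ℕ) → U(V)` is a continuous extension of `ρ : S_∞ → U(V)`:
it extends `ρ` and is continuous in the topology of pointwise convergence, i.e. for each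
`v ∈ V` and `ε > 0` there is `α` with `‖ρ̄(h)v - v‖ < ε` for every `h` fixing `0,…,α-1`. -/
def IsContinuousExtension (ρ : ↥Sinf →* (V ≃ₗᵢ[ℂ] V))
    (ρb : Equiv.Perm ℕ →* (V ≃ₗᵢ[ℂ] V)) : Prop :=
  (∀ g : ↥Sinf, ρb (g : Equiv.Perm ℕ) = ρ g) ∧
    ∀ v : V, ∀ ε : ℝ, 0 < ε → ∃ α : ℕ, ∀ h : Equiv.Perm ℕ,
      (∀ i < α, h i = i) → ‖ρb h v - v‖ < ε

end


set_option linter.unusedSectionVars false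
set_option maxHeartbeats 1000000

lemma swap_mem_Sinf (a b : ℕ) : Equiv.swap a b ∈ Sinf := by
  show Set.Finite {x | Equiv.swap a b x ≠ x}
  apply Set.Finite.subset ((Set.finite_singleton b).insert a)
  intro x hx
  simp only [Set.mem_setOf_eq] at hx
  by_contra hc
  simp only [Set.mem_insert_iff, Set.mem_singleton_iff] at hc
  push_neg at hc
  exact hx (Equiv.swap_apply_of_ne_of_ne hc.1 hc.2)

lemma exists_finitary_agree (g : Equiv.Perm ℕ) (s : Finset ℕ) :
    ∃ k : ↥Sinf, ∀ x ∈ s, (k : Equiv.Perm ℕ) x = g x := by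
  classical
  induction s using Finset.induction_on with
  | empty => exact ⟨1, by simp⟩
  | @insert a s ha ih =>
    obtain ⟨k', hk'⟩ := ih
    refine ⟨⟨Equiv.swap ((k' : Equiv.Perm ℕ) a) (g a), swap_mem_Sinf _ _⟩ * k', ?_⟩
    intro x hx
    rcases Finset.mem_insert.1 hx with rfl | hx
    · simp [Equiv.swap_apply_left]
    · have hxa : x ≠ a := fun h => ha (h ▸ hx)
      have h1 : (k' : Equiv.Perm ℕ) x = g x := hk' x hx
      show (Equiv.swap ((k' : Equiv.Perm ℕ) a) (g a)) ((k' : Equiv.Perm ℕ) x) = g x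
      rw [h1]
      exact Equiv.swap_apply_of_ne_of_ne
        (by rw [← h1]; exact fun h => hxa ((k' : Equiv.Perm ℕ).injective h))
        (fun h => hxa (g.injective h))

section AuxProof
variable {V : Type*} [NormedAddCommGroup V] [InnerProductSpace ℂ V] [CompleteSpace V]

lemma rho_mul_apply_s8 (ρ : ↥Sinf →* (V ≃ₗᵢ[ℂ] V)) (a b : ↥Sinf) (x : V) :
    ρ a (ρ b x) = ρ (a * b) x := by rw [map_mul]; rfl

lemma key (ρ : ↥Sinf →* (V ≃ₗᵢ[ℂ] V)) {v : V} {α : ℕ} (hv : v ∈ fixedVectorsS ρ α)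
    (h k1 k2 : ↥Sinf)
    (hk : ∀ i < α, (k1 : Equiv.Perm ℕ) ((h : Equiv.Perm ℕ) i)
      = (k2 : Equiv.Perm ℕ) ((h : Equiv.Perm ℕ) i)) :
    ρ (k1 * h) v = ρ (k2 * h) v := by
  have hfix : ∀ i < α, ((h⁻¹ * k2⁻¹ * k1 * h : ↥Sinf) : Equiv.Perm ℕ) i = i := by
    intro i hi
    have e : ((h⁻¹ * k2⁻¹ * k1 * h : ↥Sinf) : Equiv.Perm ℕ) i
        = (h : Equiv.Perm ℕ)⁻¹ ((k2 : Equiv.Perm ℕ)⁻¹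
            ((k1 : Equiv.Perm ℕ) ((h : Equiv.Perm ℕ) i))) := rfl
    rw [e, hk i hi]; simp
  have h1 : ρ (h⁻¹ * k2⁻¹ * k1 * h) v = v := hv _ hfix
  calc ρ (k1 * h) v = ρ ((k2 * h) * (h⁻¹ * k2⁻¹ * k1 * h)) v := by
        congr 1; group
    _ = ρ (k2 * h) (ρ (h⁻¹ * k2⁻¹ * k1 * h) v) := (rho_mul_apply_s8 ..).symm
    _ = ρ (k2 * h) v := by rw [h1]

lemma forward_dir (ρ : ↥Sinf →* (V ≃ₗᵢ[ℂ] V)) (hnz : ∃ v : V, v ≠ 0)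
    (ρb : Equiv.Perm ℕ →* (V ≃ₗᵢ[ℂ] V)) (hce : IsContinuousExtension ρ ρb) :
    ∃ (α : ℕ) (v : V), v ∈ fixedVectorsS ρ α ∧ v ≠ 0 := by
  classical
  letI : InnerProductSpace ℝ V := InnerProductSpace.complexToReal
  obtain ⟨v, hv0⟩ := hnz
  obtain ⟨hext, hcont⟩ := hce
  have hvpos : (0:ℝ) < ‖v‖ := norm_pos_iff.2 hv0
  have hε : (0:ℝ) < ‖v‖ / 2 := by linarith
  obtain ⟨α, hα⟩ := hcont v (‖v‖ / 2) hε
  set O : Set V := {w | ∃ h : ↥Sinf, (∀ i < α, (h : Equiv.Perm ℕ) i = i) ∧ ρ h v = w} with hO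
  set C : Set V := closure (convexHull ℝ O) with hC
  -- O inside the closed ball
  have hOball : O ⊆ Metric.closedBall v (‖v‖ / 2) := by
    rintro w ⟨h, hh, rfl⟩
    have : ‖ρb (h : Equiv.Perm ℕ) v - v‖ < ‖v‖ / 2 := hα _ hh
    rw [hext h] at this
    simpa [Metric.mem_closedBall, dist_eq_norm] using this.le
  have hCball : C ⊆ Metric.closedBall v (‖v‖ / 2) :=
    closure_minimal (convexHull_min hOball (convex_closedBall _ _)) Metric.isClosed_closedBall
  have h0C : (0:V) ∉ C := by
    intro h0
    have := hCball h0
    rw [Metric.mem_closedBall, dist_zero_left] at this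
    nlinarith [norm_pos_iff.2 hv0]
  have hCconv : Convex ℝ C := (convex_convexHull ℝ O).closure
  have hCclosed : IsClosed C := isClosed_closure
  have hCne : C.Nonempty := ⟨v, subset_closure (subset_convexHull ℝ O
    ⟨1, fun i _ => rfl, by rw [map_one]; rfl⟩)⟩
  obtain ⟨u, huC, hu⟩ :=
    exists_norm_eq_iInf_of_complete_convex hCne hCclosed.isComplete hCconv 0
  set d : ℝ := ⨅ w : C, ‖(0:V) - w‖ with hd
  have hund : ‖u‖ = d := by simpa [zero_sub] using hu
  have hdle : ∀ x ∈ C, d ≤ ‖x‖ := by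
    intro x hx
    have h3 : d ≤ ‖(0:V) - x‖ := ciInf_le (f := fun w : C => ‖(0:V) - w‖)
      ⟨0, Set.forall_mem_range.2 fun _ => norm_nonneg _⟩ ⟨x, hx⟩
    simpa [zero_sub] using h3
  -- uniqueness of minimal norm element
  have huniq : ∀ u' ∈ C, ‖u'‖ = d → u' = u := by
    intro u' hu'C hu'd
    have hm : (1/2:ℝ) • u + (1/2:ℝ) • u' ∈ C := hCconv huC hu'C
      (by norm_num) (by norm_num) (by norm_num)
    have hmd : d ≤ ‖(1/2:ℝ) • u + (1/2:ℝ) • u'‖ := hdle _ hm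
    have hpar := parallelogram_law_with_norm ℝ u u'
    have h2 : ‖(1/2:ℝ) • u + (1/2:ℝ) • u'‖ = ‖u + u'‖ / 2 := by
      rw [← smul_add, norm_smul]
      simp [abs_of_nonneg]
      ring
    have hd0 : 0 ≤ d := hund ▸ norm_nonneg u
    have : ‖u - u'‖ ^ 2 ≤ 0 := by nlinarith [norm_nonneg (u + u'), norm_nonneg (u - u')]
    have : ‖u - u'‖ = 0 := by nlinarith [norm_nonneg (u - u')]
    have h4 : u - u' = 0 := by
      have h5 : ‖u - u'‖ = 0 := by nlinarith [norm_nonneg (u - u')]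
      exact norm_eq_zero.1 h5
    exact (sub_eq_zero.1 h4).symm
  -- u is fixed by every finitary permutation fixing 0..α-1
  have hufix : ∀ h : ↥Sinf, (∀ i < α, (h : Equiv.Perm ℕ) i = i) → ρ h u = u := by
    intro h hh
    have hmaps : C ⊆ (ρ h) ⁻¹' C := by
      have hOD : O ⊆ (ρ h) ⁻¹' C := by
        rintro w ⟨k, hk, rfl⟩
        refine subset_closure (subset_convexHull ℝ O ?_)
        exact ⟨h * k, fun i hi => by
          have : ((h * k : ↥Sinf) : Equiv.Perm ℕ) i = (h : Equiv.Perm ℕ) ((k : Equiv.Perm ℕ) i) := rfl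
          rw [this, hk i hi, hh i hi], (rho_mul_apply_s8 ρ h k v).symm⟩
      have hDconv : Convex ℝ ((ρ h) ⁻¹' C) := by
        have := hCconv.linear_preimage
          (((ρ h).toLinearEquiv.toLinearMap).restrictScalars ℝ)
        exact this
      have hDclosed : IsClosed ((ρ h) ⁻¹' C) :=
        hCclosed.preimage (ρ h).continuous
      exact closure_minimal (convexHull_min hOD hDconv) hDclosed
    have hρuC : ρ h u ∈ C := hmaps huC
    have hρud : ‖ρ h u‖ = d := by rw [(ρ h).norm_map]; exact hund
    exact huniq _ hρuC hρud
  exact ⟨α, u, hufix, fun h0 => h0C (h0 ▸ huC)⟩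

lemma backward_dir (ρ : ↥Sinf →* (V ≃ₗᵢ[ℂ] V))
    (hirr : ∀ W : Submodule ℂ V, IsClosed (W : Set V) →
      (∀ (g : ↥Sinf), ∀ v ∈ W, ρ g v ∈ W) → W = ⊥ ∨ W = ⊤)
    (α : ℕ) (v : V) (hv : v ∈ fixedVectorsS ρ α) (hv0 : v ≠ 0) :
    ∃ ρb : Equiv.Perm ℕ →* (V ≃ₗᵢ[ℂ] V), IsContinuousExtension ρ ρb := by
  classical
  set S : Set V := Set.range (fun h : ↥Sinf => ρ h v) with hSdef
  set W : Submodule ℂ V := Submodule.span ℂ S with hWdef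
  have hvW : v ∈ W := Submodule.subset_span ⟨1, show ρ 1 v = v by rw [map_one]; rfl⟩
  -- W is invariant
  have hWinv : ∀ g : ↥Sinf, ∀ x ∈ W, ρ g x ∈ W := by
    intro g x hx
    induction hx using Submodule.span_induction with
    | mem x hxS =>
      obtain ⟨h, rfl⟩ := hxS
      exact Submodule.subset_span ⟨g * h, (rho_mul_apply_s8 ρ g h v).symm⟩
    | zero => simpa using W.zero_mem
    | add x y hx hy ihx ihy => simpa [map_add] using W.add_mem ihx ihy
    | smul c x hx ihx => simpa [map_smul] using W.smul_mem c ihx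
  -- density of W
  have hdense : Dense (W : Set V) := by
    have hinv : ∀ g : ↥Sinf, ∀ x ∈ W.topologicalClosure, ρ g x ∈ W.topologicalClosure := by
      intro g x hx
      have hx' : x ∈ closure (W : Set V) := by
        rw [← Submodule.topologicalClosure_coe]; exact hx
      have h2 : ρ g x ∈ closure ((ρ g) '' (W : Set V)) :=
        image_closure_subset_closure_image (ρ g).continuous ⟨x, hx', rfl⟩
      have h3 : ρ g x ∈ closure (W : Set V) :=
        closure_mono (by rintro y ⟨z, hz, rfl⟩; exact hWinv g z hz) h2
      rw [← Submodule.topologicalClosure_coe] at h3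
      exact h3
    rcases hirr W.topologicalClosure W.isClosed_topologicalClosure hinv with hbot | htop
    · exact absurd (hbot ▸ W.le_topologicalClosure hvW) (by simpa using hv0)
    · rw [dense_iff_closure_eq, ← Submodule.topologicalClosure_coe, htop]
      rfl
  -- choose finitary approximations
  choose G hG using fun (g : Equiv.Perm ℕ) (n : ℕ) =>
    exists_finitary_agree g (Finset.range n)
  have hG' : ∀ g n x, x < n → (G g n : Equiv.Perm ℕ) x = g x :=
    fun g n x hx => hG g n x (Finset.mem_range.2 hx)
  -- bound for a finitary permutation
  set B : ↥Sinf → ℕ :=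
    fun h => ((Finset.range α).image fun i => (h : Equiv.Perm ℕ) i).sup id + 1 with hBdef
  have hB : ∀ (h : ↥Sinf) i, i < α → (h : Equiv.Perm ℕ) i < B h := by
    intro h i hi
    exact Nat.lt_succ_of_le (Finset.le_sup (f := id)
      (Finset.mem_image_of_mem _ (Finset.mem_range.2 hi)))
  -- eventual constancy on W
  have hevconst : ∀ (g : Equiv.Perm ℕ), ∀ w ∈ W,
      ∃ N, ∀ m n, N ≤ m → N ≤ n → ρ (G g m) w = ρ (G g n) w := by
    intro g w hw
    induction hw using Submodule.span_induction with
    | mem x hxS =>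
      obtain ⟨h, rfl⟩ := hxS
      refine ⟨B h, fun m n hm hn => ?_⟩
      rw [rho_mul_apply_s8, rho_mul_apply_s8]
      refine key ρ hv h (G g m) (G g n) (fun i hi => ?_)
      rw [hG' g m _ (lt_of_lt_of_le (hB h i hi) hm),
        hG' g n _ (lt_of_lt_of_le (hB h i hi) hn)]
    | zero => exact ⟨0, fun m n _ _ => by simp⟩
    | add x y hx hy ihx ihy =>
      obtain ⟨N1, h1⟩ := ihx
      obtain ⟨N2, h2⟩ := ihy
      exact ⟨max N1 N2, fun m n hm hn => by
        rw [map_add, map_add, h1 m n (le_trans (le_max_left _ _) hm)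
          (le_trans (le_max_left _ _) hn), h2 m n (le_trans (le_max_right _ _) hm)
          (le_trans (le_max_right _ _) hn)]⟩
    | smul c x hx ihx =>
      obtain ⟨N, h1⟩ := ihx
      exact ⟨N, fun m n hm hn => by rw [map_smul, map_smul, h1 m n hm hn]⟩
  -- density gives approximation
  have happrox : ∀ (x : V) (ε : ℝ), 0 < ε → ∃ w ∈ W, dist x w < ε := by
    intro x ε hε
    have hx : x ∈ closure (W : Set V) := by rw [hdense.closure_eq]; trivial
    exact Metric.mem_closure_iff.1 hx ε hε
  -- Cauchy
  have hcauchy : ∀ (g : Equiv.Perm ℕ) (w : V), CauchySeq (fun n => ρ (G g n) w) := by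
    intro g w
    rw [Metric.cauchySeq_iff]
    intro ε hε
    obtain ⟨w', hw'W, hw'⟩ := happrox w (ε / 3) (by linarith)
    obtain ⟨N, hN⟩ := hevconst g w' hw'W
    refine ⟨N, fun m hm n hn => ?_⟩
    calc dist (ρ (G g m) w) (ρ (G g n) w)
        ≤ dist (ρ (G g m) w) (ρ (G g m) w') + dist (ρ (G g m) w') (ρ (G g n) w')
          + dist (ρ (G g n) w') (ρ (G g n) w) := dist_triangle4 _ _ _ _
      _ = dist w w' + 0 + dist w' w := by
          rw [(ρ (G g m)).dist_map, (ρ (G g n)).dist_map, hN m n hm hn, dist_self]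
      _ < ε := by rw [dist_comm w' w] at *; linarith
  choose φ hφ using fun (g : Equiv.Perm ℕ) (w : V) =>
    cauchySeq_tendsto_of_complete (hcauchy g w)
  have hconst : ∀ g w u, (∃ N, ∀ n, N ≤ n → ρ (G g n) w = u) → φ g w = u := by
    rintro g w u ⟨N, hN⟩
    exact tendsto_nhds_unique (hφ g w) (tendsto_atTop_of_eventually_const hN)
  have hadd : ∀ g x y, φ g (x + y) = φ g x + φ g y := fun g x y =>
    tendsto_nhds_unique (hφ g (x + y)) (by simpa [map_add] using (hφ g x).add (hφ g y))
  have hsmul : ∀ g (c : ℂ) x, φ g (c • x) = c • φ g x := fun g c x =>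
    tendsto_nhds_unique (hφ g (c • x)) (by simpa [map_smul] using (hφ g x).const_smul c)
  have hnorm : ∀ g x, ‖φ g x‖ = ‖x‖ := fun g x =>
    tendsto_nhds_unique (hφ g x).norm
      (by simpa [LinearIsometryEquiv.norm_map] using
        (tendsto_const_nhds : Filter.Tendsto (fun _ : ℕ => ‖x‖) Filter.atTop (nhds ‖x‖)))
  let Φ : Equiv.Perm ℕ → (V →ₗᵢ[ℂ] V) := fun g => ⟨⟨⟨φ g, hadd g⟩, hsmul g⟩, hnorm g⟩
  have hΦcont : ∀ g, Continuous (φ g) := fun g => (Φ g).continuous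
  have hzero : ∀ g, φ g 0 = 0 := fun g => (Φ g).map_zero
  have hsub : ∀ g x y, φ g (x - y) = φ g x - φ g y := fun g x y => (Φ g).map_sub x y
  -- generator formula
  have hgenφ : ∀ (g : Equiv.Perm ℕ) (h k : ↥Sinf),
      (∀ i < α, (k : Equiv.Perm ℕ) ((h : Equiv.Perm ℕ) i) = g ((h : Equiv.Perm ℕ) i)) →
      φ g (ρ h v) = ρ (k * h) v := by
    intro g h k hk
    refine hconst g _ _ ⟨B h, fun n hn => ?_⟩
    rw [rho_mul_apply_s8]
    refine key ρ hv h (G g n) k (fun i hi => ?_)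
    rw [hG' g n _ (lt_of_lt_of_le (hB h i hi) hn), hk i hi]
  -- equality on dense subspace implies equality
  have hext_eq : ∀ (f1 f2 : V → V), Continuous f1 → Continuous f2 →
      (∀ w ∈ W, f1 w = f2 w) → ∀ x, f1 x = f2 x := by
    intro f1 f2 h1 h2 heq x
    have hclos : Set.EqOn f1 f2 (closure (W : Set V)) :=
      Set.EqOn.closure (fun y hy => heq y hy) h1 h2
    have hx : x ∈ closure (W : Set V) := by rw [hdense.closure_eq]; trivial
    exact hclos hx
  -- φ extends ρ
  have hφcoe : ∀ (g : ↥Sinf) (x : V), φ (g : Equiv.Perm ℕ) x = ρ g x := by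
    intro g
    refine hext_eq _ _ (hΦcont _) (ρ g).continuous ?_
    intro w hw
    induction hw using Submodule.span_induction with
    | mem x hxS =>
      obtain ⟨h, rfl⟩ := hxS
      rw [hgenφ (g : Equiv.Perm ℕ) h g (fun i hi => rfl), rho_mul_apply_s8]
    | zero => rw [hzero, map_zero]
    | add x y hx hy ihx ihy => rw [hadd, map_add, ihx, ihy]
    | smul c x hx ihx => rw [hsmul, map_smul, ihx]
  -- multiplicativity
  have hφmul : ∀ (g g' : Equiv.Perm ℕ) (x : V), φ g (φ g' x) = φ (g * g') x := by
    intro g g'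
    refine hext_eq _ _ ((hΦcont g).comp (hΦcont g')) (hΦcont _) ?_
    intro w hw
    induction hw using Submodule.span_induction with
    | mem x hxS =>
      obtain ⟨h, rfl⟩ := hxS
      set k' : ↥Sinf := G g' (B h) with hk'def
      have hk' : φ g' (ρ h v) = ρ (k' * h) v :=
        hgenφ g' h k' (fun i hi => hG' g' (B h) _ (hB h i hi))
      set k : ↥Sinf := G g (B (k' * h)) with hkdef
      have hk : φ g (ρ (k' * h) v) = ρ (k * (k' * h)) v :=
        hgenφ g (k' * h) k (fun i hi => hG' g (B (k' * h)) _ (hB (k' * h) i hi))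
      have h3 : φ (g * g') (ρ h v) = ρ ((k * k') * h) v := by
        refine hgenφ (g * g') h (k * k') (fun i hi => ?_)
        have e1 : ((k * k' : ↥Sinf) : Equiv.Perm ℕ) ((h : Equiv.Perm ℕ) i)
            = (k : Equiv.Perm ℕ) ((k' : Equiv.Perm ℕ) ((h : Equiv.Perm ℕ) i)) := rfl
        have e2 : ((k' * h : ↥Sinf) : Equiv.Perm ℕ) i
            = (k' : Equiv.Perm ℕ) ((h : Equiv.Perm ℕ) i) := rfl
        have e3 : (k' : Equiv.Perm ℕ) ((h : Equiv.Perm ℕ) i)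
            = g' ((h : Equiv.Perm ℕ) i) := hG' g' (B h) _ (hB h i hi)
        have e4 : (k : Equiv.Perm ℕ) ((k' : Equiv.Perm ℕ) ((h : Equiv.Perm ℕ) i))
            = g ((k' : Equiv.Perm ℕ) ((h : Equiv.Perm ℕ) i)) := by
          have := hB (k' * h) i hi
          rw [e2] at this
          exact hG' g (B (k' * h)) _ this
        rw [e1, e4, e3]
        rfl
      rw [hk', hk, ← mul_assoc, h3]
    | zero => rw [hzero, hzero, hzero]
    | add x y hx hy ihx ihy => rw [hadd, hadd, hadd, ihx, ihy]
    | smul c x hx ihx => rw [hsmul, hsmul, hsmul, ihx]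
  -- identity
  have hφone : ∀ x : V, φ 1 x = x := by
    refine hext_eq _ _ (hΦcont 1) continuous_id ?_
    intro w hw
    induction hw using Submodule.span_induction with
    | mem x hxS =>
      obtain ⟨h, rfl⟩ := hxS
      rw [hgenφ 1 h 1 (fun i hi => rfl), one_mul]
    | zero => rw [hzero]
    | add x y hx hy ihx ihy => rw [hadd, ihx, ihy]
    | smul c x hx ihx => rw [hsmul, ihx]
  -- build the extension
  have hleft : ∀ (g : Equiv.Perm ℕ) (x : V), φ g⁻¹ (φ g x) = x := by
    intro g x
    rw [hφmul g⁻¹ g x, inv_mul_cancel, hφone]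
  have hright : ∀ (g : Equiv.Perm ℕ) (x : V), φ g (φ g⁻¹ x) = x := by
    intro g x
    rw [hφmul g g⁻¹ x, mul_inv_cancel, hφone]
  let E : Equiv.Perm ℕ → (V ≃ₗᵢ[ℂ] V) := fun g =>
    ⟨⟨⟨⟨φ g, hadd g⟩, hsmul g⟩, φ g⁻¹, hleft g, hright g⟩, hnorm g⟩
  refine ⟨⟨⟨E, ?_⟩, ?_⟩, ?_, ?_⟩
  · exact LinearIsometryEquiv.ext fun x => hφone x
  · intro g g'
    exact LinearIsometryEquiv.ext fun x => (hφmul g g' x).symm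
  · intro g
    exact LinearIsometryEquiv.ext fun x => hφcoe g x
  · -- continuity
    intro w ε hε
    obtain ⟨w', hw'W, hw'⟩ := happrox w (ε / 3) (by linarith)
    have hQ : ∃ β : ℕ, ∀ p : Equiv.Perm ℕ, (∀ i < β, p i = i) → φ p w' = w' := by
      clear hw'
      induction hw'W using Submodule.span_induction with
      | mem x hxS =>
        obtain ⟨h, rfl⟩ := hxS
        refine ⟨B h, fun p hp => ?_⟩
        rw [hgenφ p h 1 (fun i hi => (hp _ (hB h i hi)).symm), one_mul]
      | zero => exact ⟨0, fun p _ => hzero p⟩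
      | add x y hx hy ihx ihy =>
        obtain ⟨β1, h1⟩ := ihx
        obtain ⟨β2, h2⟩ := ihy
        exact ⟨max β1 β2, fun p hp => by
          rw [hadd, h1 p (fun i hi => hp i (lt_of_lt_of_le hi (le_max_left _ _))),
            h2 p (fun i hi => hp i (lt_of_lt_of_le hi (le_max_right _ _)))]⟩
      | smul c x hx ihx =>
        obtain ⟨β, h1⟩ := ihx
        exact ⟨β, fun p hp => by rw [hsmul, h1 p hp]⟩
    obtain ⟨β, hβ⟩ := hQ
    refine ⟨β, fun h hh => ?_⟩
    have e1 : φ h w - w = (φ h w - φ h w') + (φ h w' - w') + (w' - w) := by abel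
    have e2 : ‖φ h w - φ h w'‖ = ‖w - w'‖ := by
      rw [← hsub]
      exact hnorm h (w - w')
    have e3 : φ h w' - w' = 0 := by rw [hβ h hh, sub_self]
    calc ‖φ h w - w‖ ≤ ‖(φ h w - φ h w') + (φ h w' - w')‖ + ‖w' - w‖ := by
          rw [e1]; exact norm_add_le _ _
      _ ≤ ‖φ h w - φ h w'‖ + ‖φ h w' - w'‖ + ‖w' - w‖ := by
          gcongr; exact norm_add_le _ _
      _ < ε := by
          rw [e2, e3, norm_zero, ← dist_eq_norm, ← dist_eq_norm, dist_comm w' w]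
          linarith [hw']

end AuxProof

/-- An irreducible unitary representation `ρ` of `S_∞` on a (nonzero)
complex Hilbert space `V` admits a continuous extension to the full symmetric group
`Perm(ℕ)` if and only if `V[α] ≠ {0}` for some `α`. -/
theorem irreducible_extension_iff_exists_nonzero_fixedVector
    {V : Type*} [NormedAddCommGroup V] [InnerProductSpace ℂ V] [CompleteSpace V]
    (ρ : ↥Sinf →* (V ≃ₗᵢ[ℂ] V))
    (hnz : ∃ v : V, v ≠ 0)
    (hirr : ∀ W : Submodule ℂ V, IsClosed (W : Set V) →
      (∀ (g : ↥Sinf), ∀ v ∈ W, ρ g v ∈ W) → W = ⊥ ∨ W = ⊤) :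
    (∃ ρb : Equiv.Perm ℕ →* (V ≃ₗᵢ[ℂ] V), IsContinuousExtension ρ ρb) ↔
      ∃ (α : ℕ) (v : V), v ∈ fixedVectorsS ρ α ∧ v ≠ 0 := by

  constructor
  · rintro ⟨ρb, hce⟩
    exact forward_dir ρ hnz ρb hce
  · rintro ⟨α, v, hv, hv0⟩
    exact backward_dir ρ hirr α v hv hv0
end
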